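/- Let q be a prime power, f ∈ P_q(n) a polynomial of degree d' > d, and let e, k ≥ 1 with d + ek < (q−1)n. Then for P_1,...,P_k independent uniform in P_q(n,e), the probability that deg(f·P_1···P_k) ≤ d + ek is at most 1 − q^{−k/(q−1)} ≤ q^{−η(q,k)} where η(q,k) = 1/(q^{k/(q−1)} ln q). -/

import Mathlib

open MvPolynomial

/-- Total degree of a monomial (exponent vector). -/
def mdeg {n : ℕ} (m : Fin n →₀ ℕ) : ℕ := ∑ i, m i

/-- A polynomial is reduced if all individual degrees are at most `q - 1`
(the canonical representative in `P_q(n) = F_q[X]/(X_i^q - X_i)`). -/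
def RMReduced {n q : ℕ} (p : MvPolynomial (Fin n) (ZMod q)) : Prop :=
  ∀ m ∈ p.support, ∀ i, m i ≤ q - 1

/-- Membership in `P_q(n,e)`: reduced and total degree at most `e`. -/
def InP (q n e : ℕ) (p : MvPolynomial (Fin n) (ZMod q)) : Prop :=
  RMReduced p ∧ p.totalDegree ≤ e

/-- `h` is the product of `f` and `g` in `P_q(n)`: it is the reduced polynomial
representing the pointwise product of the functions represented by `f` and `g`. -/
def RedProd {n q : ℕ} (f g h : MvPolynomial (Fin n) (ZMod q)) : Prop :=
  RMReduced h ∧ ∀ x : Fin n → ZMod q, eval x h = eval x f * eval x g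


-- Part 2 analytic lemma
lemma part2 (q : ℕ) (hq : 2 ≤ q) (k : ℕ) :
    (1 : ℝ) - (q : ℝ) ^ (-(k : ℝ) / ((q : ℝ) - 1))
      ≤ (q : ℝ) ^ (-(1 / ((q : ℝ) ^ ((k : ℝ) / ((q : ℝ) - 1)) * Real.log q))) := by
  have hq1 : (1:ℝ) < q := by exact_mod_cast hq
  have hq0 : (0:ℝ) < q := by linarith
  have hlq : 0 < Real.log q := Real.log_pos hq1
  set t : ℝ := (k : ℝ) / ((q : ℝ) - 1) with ht
  have h1 : (q:ℝ) ^ (-t) = Real.exp (-(t * Real.log q)) := by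
    rw [Real.rpow_def_of_pos hq0]; ring_nf
  have hx : (q:ℝ) ^ (-t) = ((q:ℝ) ^ t)⁻¹ := by
    rw [Real.rpow_neg (le_of_lt hq0)]
  have h2 : (q : ℝ) ^ (-(1 / ((q : ℝ) ^ t * Real.log q)))
      = Real.exp (-(((q:ℝ)^t)⁻¹)) := by
    rw [Real.rpow_def_of_pos hq0]
    congr 1
    have hqt : (0:ℝ) < (q:ℝ) ^ t := Real.rpow_pos_of_pos hq0 t
    field_simp
  have key : ∀ x : ℝ, 1 - x ≤ Real.exp (-x) := by
    intro x
    have := Real.add_one_le_exp (-x)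
    linarith
  rw [show -(k:ℝ) / ((q:ℝ)-1) = -t by rw [ht]; ring, h2, hx]
  exact key _

lemma bern (q k : ℕ) (hq : 2 ≤ q) :
    (q : ℝ) ^ (-(k : ℝ) / ((q : ℝ) - 1)) ≤ (((q:ℝ) - 1) / q) ^ k := by
  have hq1 : (1:ℝ) < q := by exact_mod_cast hq
  have hq0 : (0:ℝ) < q := by linarith
  set s : ℝ := (q : ℝ) ^ (-(1:ℝ) / ((q : ℝ) - 1)) with hs
  have hs0 : 0 < s := Real.rpow_pos_of_pos hq0 _
  have hqm1 : (0:ℝ) < (q:ℝ) - 1 := by linarith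
  have hnz : ((q:ℝ) - 1) ≠ 0 := ne_of_gt hqm1
  -- s ^ (q-1) = 1/q
  have h1 : s ^ (q - 1) = ((q:ℝ))⁻¹ := by
    rw [hs, ← Real.rpow_natCast ((q:ℝ) ^ (-(1:ℝ)/((q:ℝ)-1))) (q-1), ← Real.rpow_mul (le_of_lt hq0)]
    have : (-(1:ℝ)/((q:ℝ)-1)) * ((q - 1 : ℕ) : ℝ) = -1 := by
      have : ((q - 1 : ℕ) : ℝ) = (q:ℝ) - 1 := by
        have : 1 ≤ q := by omega
        push_cast [Nat.cast_sub this]; ring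
      rw [this]; field_simp
    rw [this, Real.rpow_neg_one]
  -- Bernoulli: (1 - 1/q)^(q-1) ≥ 1/q
  have h2 : ((q:ℝ))⁻¹ ≤ (((q:ℝ) - 1)/q) ^ (q - 1) := by
    have hber := one_add_mul_le_pow (a := -(1/(q:ℝ))) (by
      have h01 : (1:ℝ)/q ≤ 1 := by rw [div_le_one hq0]; linarith
      linarith) (q - 1)
    have hcast : ((q - 1 : ℕ) : ℝ) = (q:ℝ) - 1 := by
      have : 1 ≤ q := by omega
      push_cast [Nat.cast_sub this]; ring
    have e1 : (1 : ℝ) + -(1/(q:ℝ)) = ((q:ℝ) - 1)/q := by field_simp; ring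
    rw [hcast, e1] at hber
    have e2 : (1:ℝ) + ((q:ℝ)-1) * -(1/q) = (q:ℝ)⁻¹ := by field_simp; ring
    linarith [hber]
  have h3 : s ≤ ((q:ℝ) - 1)/q := by
    have hn : q - 1 ≠ 0 := by omega
    have := pow_le_pow_iff_left₀ (le_of_lt hs0) (by positivity : (0:ℝ) ≤ ((q:ℝ)-1)/q) hn
    exact this.mp (by rw [h1]; exact h2)
  calc (q : ℝ) ^ (-(k : ℝ) / ((q : ℝ) - 1)) = s ^ k := by
        rw [hs, ← Real.rpow_natCast ((q:ℝ) ^ (-(1:ℝ)/((q:ℝ)-1))) k, ← Real.rpow_mul (le_of_lt hq0)]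
        congr 1; field_simp
    _ ≤ (((q:ℝ) - 1)/q) ^ k := pow_le_pow_left₀ (le_of_lt hs0) h3 k

lemma fill {n : ℕ} (c : Fin n →₀ ℕ) : ∀ (D : ℕ), D ≤ ∑ i, c i →
    ∃ μ : Fin n →₀ ℕ, (∀ i, μ i ≤ c i) ∧ ∑ i, μ i = D := by
  intro D
  induction D with
  | zero => intro _; exact ⟨0, fun i => Nat.zero_le _, by simp⟩
  | succ D ih =>
    intro hD
    obtain ⟨μ, hle, hsum⟩ := ih (by omega)
    have : ∃ i, μ i < c i := by
      by_contra h
      push_neg at h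
      have : ∑ i, c i ≤ ∑ i, μ i := Finset.sum_le_sum (fun i _ => h i)
      omega
    obtain ⟨i, hi⟩ := this
    refine ⟨μ + Finsupp.single i 1, fun j => ?_, ?_⟩
    · rw [Finsupp.add_apply, Finsupp.single_apply]
      by_cases hji : i = j
      · subst hji; simp; omega
      · simp [hji]; exact hle j
    · simp only [Finsupp.add_apply, Finset.sum_add_distrib, hsum]
      have : ∑ j, (Finsupp.single i 1 : Fin n →₀ ℕ) j = 1 := by
        simp [Finsupp.single_apply]
      omega

lemma split {n : ℕ} (e : ℕ) : ∀ (k : ℕ) (μ : Fin n →₀ ℕ), (∑ i, μ i) ≤ e * k →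
    ∃ ν : Fin k → (Fin n →₀ ℕ), (∑ j, ν j) = μ ∧ ∀ j, (∑ i, ν j i) ≤ e := by
  intro k
  induction k with
  | zero =>
    intro μ hμ
    have : μ = 0 := by
      ext i
      have h1 : ∑ i, μ i = 0 := by omega
      have := Finset.sum_eq_zero_iff.mp h1 i (Finset.mem_univ i)
      simpa using this
    exact ⟨fun j => 0, by simp [this], fun j => j.elim0⟩
  | succ k ih =>
    intro μ hμ
    set D₁ := min e (∑ i, μ i) with hD₁
    obtain ⟨ν₀, hle, hsum⟩ := fill μ D₁ (min_le_right _ _)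
    set μ' : Fin n →₀ ℕ := Finsupp.zipWith (· - ·) (by simp) μ ν₀ with hμ'
    have hap : ∀ i, μ' i = μ i - ν₀ i := fun i => Finsupp.zipWith_apply ..
    have hsum' : (∑ i, μ' i) + D₁ = ∑ i, μ i := by
      rw [← hsum, ← Finset.sum_add_distrib]
      apply Finset.sum_congr rfl
      intro i _
      rw [hap i]
      have := hle i
      omega
    have hbound : (∑ i, μ' i) ≤ e * k := by
      rcases le_total e (∑ i, μ i) with h | h
      · have : D₁ = e := min_eq_left h
        have hek : e * (k+1) = e * k + e := by ring
        omega
      · have : D₁ = ∑ i, μ i := min_eq_right h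
        omega
    obtain ⟨ν, hν, hνb⟩ := ih μ' hbound
    refine ⟨Fin.cons ν₀ ν, ?_, ?_⟩
    · rw [Fin.sum_cons, hν]
      ext i
      rw [Finsupp.add_apply, hap i]
      have := hle i
      omega
    · intro j
      refine Fin.cases ?_ ?_ j
      · show (∑ i, (Fin.cons ν₀ ν : Fin (k+1) → (Fin n →₀ ℕ)) 0 i) ≤ e
        simp only [Fin.cons_zero, hsum]
        exact min_le_left e (∑ i, μ i)
      · intro j'; simpa using hνb j'


section Red
variable {q n : ℕ} (r : ℕ → ℕ) (hr0 : r 0 = 0)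

noncomputable def redm (m : Fin n →₀ ℕ) : Fin n →₀ ℕ := Finsupp.mapRange r hr0 m

noncomputable def redP (g : MvPolynomial (Fin n) (ZMod q)) : MvPolynomial (Fin n) (ZMod q) :=
  AddMonoidAlgebra.mapDomain (redm r hr0) g

lemma redP_add (g h : MvPolynomial (Fin n) (ZMod q)) :
    redP r hr0 (g + h) = redP r hr0 g + redP r hr0 h := AddMonoidAlgebra.mapDomain_add _ _ _

lemma redP_smul (c : ZMod q) (g : MvPolynomial (Fin n) (ZMod q)) :
    redP r hr0 (c • g) = c • redP r hr0 g := congrArg AddMonoidAlgebra.ofCoeff (Finsupp.mapDomain_smul c (AddMonoidAlgebra.coeff g))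

lemma redP_monomial (m : Fin n →₀ ℕ) (c : ZMod q) :
    redP r hr0 (monomial m c) = monomial (redm r hr0 m) c := by
  rw [← single_eq_monomial, ← single_eq_monomial]
  exact AddMonoidAlgebra.mapDomain_single

lemma redP_sum {ι : Type*} (s : Finset ι) (g : ι → MvPolynomial (Fin n) (ZMod q)) :
    redP r hr0 (∑ i ∈ s, g i) = ∑ i ∈ s, redP r hr0 (g i) := by
  classical
  induction s using Finset.induction_on with
  | empty => simp [redP]
  | insert _ _ hns ih =>
    rw [Finset.sum_insert hns, Finset.sum_insert hns, redP_add, ih]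

lemma eval_redP (hpow : ∀ (x : ZMod q) (t : ℕ), x ^ r t = x ^ t)
    (x : Fin n → ZMod q) (g : MvPolynomial (Fin n) (ZMod q)) :
    eval x (redP r hr0 g) = eval x g := by
  induction g using MvPolynomial.induction_on' with
  | monomial u a =>
    rw [redP_monomial, eval_monomial, eval_monomial]
    congr 1
    rw [Finsupp.prod_fintype _ _ (fun i => pow_zero _),
        Finsupp.prod_fintype _ _ (fun i => pow_zero _)]
    apply Finset.prod_congr rfl
    intro i _
    show x i ^ (Finsupp.mapRange r hr0 u) i = x i ^ u i
    rw [Finsupp.mapRange_apply, hpow]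
  | add p q hp hq => rw [redP_add, map_add, map_add, hp, hq]

lemma redP_reduced (hrle : ∀ t, r t ≤ q - 1) (g : MvPolynomial (Fin n) (ZMod q)) :
    RMReduced (redP r hr0 g) := by
  classical
  intro m hm i
  have := Finsupp.mapDomain_support (f := redm r hr0) (s := AddMonoidAlgebra.coeff g) (show m ∈ _ from hm)
  obtain ⟨m', _, rfl⟩ := Finset.mem_image.mp this
  show r (m' i) ≤ q - 1
  exact hrle _

lemma redP_mul_monomial (f : MvPolynomial (Fin n) (ZMod q)) (μ : Fin n →₀ ℕ) :
    redP r hr0 (f * monomial μ 1)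
      = ∑ σ ∈ f.support, monomial (redm r hr0 (σ + μ)) (coeff σ f) := by
  conv_lhs => rw [f.as_sum, Finset.sum_mul]
  rw [redP_sum]
  apply Finset.sum_congr rfl
  intro σ _
  rw [monomial_mul, mul_one, redP_monomial]

lemma coeff_redP_key (hr_eq : ∀ t, t ≤ q - 1 → r t = t) (hr_le : ∀ t, r t ≤ t)
    (f : MvPolynomial (Fin n) (ZMod q)) (m₀ : Fin n →₀ ℕ) (hm₀ : m₀ ∈ f.support)
    (hmax : ∀ σ ∈ f.support, ∑ i, σ i ≤ ∑ i, m₀ i)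
    (μ : Fin n →₀ ℕ) (hμ : ∀ i, m₀ i + μ i ≤ q - 1) :
    coeff (m₀ + μ) (redP r hr0 (f * monomial μ 1)) = coeff m₀ f := by
  classical
  rw [redP_mul_monomial]
  rw [MvPolynomial.coeff_sum]
  simp only [coeff_monomial]
  rw [Finset.sum_eq_single_of_mem m₀ hm₀]
  · rw [if_pos]
    apply Finsupp.ext
    intro i
    show r ((m₀ + μ) i) = (m₀ + μ) i
    rw [Finsupp.add_apply]
    exact hr_eq _ (hμ i)
  · intro σ hσ hne
    rw [if_neg]
    intro heq
    -- degree bookkeeping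
    have hle : ∀ τ : Fin n →₀ ℕ, ∀ i : Fin n, (redm r hr0 τ) i ≤ τ i := by
      intro τ i
      show r (τ i) ≤ τ i
      exact hr_le _
    have hsum1 : ∑ i, (m₀ + μ) i ≤ ∑ i, (σ + μ) i := by
      rw [← heq]
      exact Finset.sum_le_sum (fun i _ => hle _ i)
    have hsum2 : ∑ i, σ i ≤ ∑ i, m₀ i := hmax σ hσ
    have haddσ : ∑ i, (σ + μ) i = (∑ i, σ i) + ∑ i, μ i := by
      simp [Finsupp.add_apply, Finset.sum_add_distrib]
    have haddm : ∑ i, (m₀ + μ) i = (∑ i, m₀ i) + ∑ i, μ i := by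
      simp [Finsupp.add_apply, Finset.sum_add_distrib]
    have hsums : ∑ i, (redm r hr0 (σ + μ)) i = ∑ i, (σ + μ) i := by
      rw [heq] at *
      omega
    have hpt : ∀ i, (redm r hr0 (σ + μ)) i = (σ + μ) i := by
      by_contra h
      push_neg at h
      obtain ⟨i, hi⟩ := h
      have : ∑ i, (redm r hr0 (σ + μ)) i < ∑ i, (σ + μ) i :=
        Finset.sum_lt_sum (fun j _ => hle _ j) ⟨i, Finset.mem_univ i, lt_of_le_of_ne (hle _ i) hi⟩
      omega
    have : σ + μ = m₀ + μ := by
      rw [← heq]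
      apply Finsupp.ext
      intro i
      exact (hpt i).symm
    exact hne (add_right_cancel this)

lemma exists_r (p a q : ℕ) (hp : p.Prime) (ha : 1 ≤ a) (hq : q = p ^ a) :
    ∃ r : ℕ → ℕ, r 0 = 0 ∧ (∀ t, r t ≤ q - 1) ∧ (∀ t, r t ≤ t) ∧
      (∀ t, t ≤ q - 1 → r t = t) ∧ (∀ (x : ZMod q) (t : ℕ), x ^ r t = x ^ t) := by
  subst hq
  set q := p ^ a with hq
  have hp2 : 2 ≤ p := hp.two_le
  set b := p ^ (a - 1) with hb
  have hb1 : 1 ≤ b := Nat.one_le_pow _ _ (by omega)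
  have hbq : b < q := by
    rw [hq, hb]
    exact Nat.pow_lt_pow_right (by omega) (by omega)
  have hq2 : 2 ≤ q := by
    rw [hq]
    calc 2 ≤ p := hp2
    _ ≤ p ^ a := Nat.le_self_pow (by omega) p
  set Λ := q - b with hΛ
  have hΛ1 : 1 ≤ Λ := by omega
  have hab : a ≤ b := by
    have := Nat.lt_pow_self (by omega : 1 < p) (n := a - 1)
    omega
  have htot : Nat.totient q = Λ := by
    rw [hq]
    rw [Nat.totient_prime_pow hp (by omega : 0 < a)]
    have : p ^ (a-1) * p = p ^ a := by
      rw [← pow_succ]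
      congr 1
      omega
    have hple : p ^ (a-1) ≤ p ^ a := Nat.pow_le_pow_right (by omega) (by omega)
    rw [hΛ, hq, hb]
    rw [Nat.mul_sub]
    omega
  haveI : NeZero q := ⟨by omega⟩
  -- step lemma
  have step : ∀ (x : ZMod q) (s : ℕ), b ≤ s → x ^ (s + Λ) = x ^ s := by
    intro x s hs
    by_cases hx : IsUnit x
    · obtain ⟨u, rfl⟩ := hx
      rw [pow_add]
      have : (u : ZMod q) ^ Λ = ((u ^ Λ : (ZMod q)ˣ) : ZMod q) := by
        push_cast; ring
      rw [this, ← htot, ZMod.pow_totient u, Units.val_one, mul_one]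
    · -- x^b = 0
      have hxb : x ^ b = 0 := by
        have hv : ((x.val : ℕ) : ZMod q) = x := by
          rw [ZMod.natCast_val, ZMod.cast_id]
        have hpd : p ∣ x.val := by
          by_contra hnd
          apply hx
          have hcop : Nat.Coprime x.val p := (Nat.Prime.coprime_iff_not_dvd hp).mpr hnd |>.symm
          have : Nat.Coprime x.val q := Nat.Coprime.pow_right _ hcop
          have := (ZMod.isUnit_iff_coprime x.val q).mpr this
          rwa [hv] at this
        obtain ⟨c, hc⟩ := hpd
        rw [← hv]
        have : ((x.val : ℕ) : ZMod q) ^ b = ((x.val ^ b : ℕ) : ZMod q) := by push_cast; ring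
        rw [this]
        rw [(CharP.cast_eq_zero_iff (ZMod q) q _)]
        rw [hc, mul_pow]
        exact Dvd.dvd.mul_right (pow_dvd_pow p hab) _
      have hz : ∀ m, b ≤ m → x ^ m = 0 := by
        intro m hm
        have : x ^ m = x ^ b * x ^ (m - b) := by
          rw [← pow_add]
          congr 1
          omega
        rw [this, hxb, zero_mul]
      rw [hz _ (by omega), hz _ hs]
  have multi : ∀ (x : ZMod q) (m s : ℕ), b ≤ s → x ^ (s + m * Λ) = x ^ s := by
    intro x m
    induction m with
    | zero => simp
    | succ m ih =>
      intro s hs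
      have : s + (m+1) * Λ = (s + m * Λ) + Λ := by ring
      rw [this, step x _ (by omega), ih s hs]
  refine ⟨fun t => if t ≤ q - 1 then t else b + (t - b) % Λ, by simp, ?_, ?_, ?_, ?_⟩
  · intro t
    show (if t ≤ q - 1 then t else b + (t - b) % Λ) ≤ q - 1
    by_cases h : t ≤ q - 1
    · rw [if_pos h]; exact h
    · rw [if_neg h]
      have := Nat.mod_lt (t - b) (show 0 < Λ by omega)
      omega
  · intro t
    show (if t ≤ q - 1 then t else b + (t - b) % Λ) ≤ t
    by_cases h : t ≤ q - 1
    · rw [if_pos h]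
    · rw [if_neg h]
      have h1 := Nat.mod_le (t - b) Λ
      omega
  · intro t ht
    show (if t ≤ q - 1 then t else b + (t - b) % Λ) = t
    rw [if_pos ht]
  · intro x t
    show x ^ (if t ≤ q - 1 then t else b + (t - b) % Λ) = x ^ t
    by_cases h : t ≤ q - 1
    · rw [if_pos h]
    · rw [if_neg h]
      have hbt : b ≤ t := by omega
      have hdm := Nat.div_add_mod (t - b) Λ
      have hdm' : ((t - b) / Λ) * Λ + (t - b) % Λ = t - b := by
        rw [Nat.mul_comm] at hdm
        exact hdm
      have ht' : t = (b + (t - b) % Λ) + ((t - b) / Λ) * Λ := by omega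
      conv_rhs => rw [ht']
      rw [multi x _ _ (by omega)]

lemma comp_vanish (p a q : ℕ) (hp : p.Prime) (ha : 2 ≤ a) (hq : q = p ^ a) (x : ZMod q) :
    (p ^ (a-1) : ZMod q) * x ^ (q-1) = (p ^ (a-1) : ZMod q) * x ^ (p-1) := by
  have hp2 : 2 ≤ p := hp.two_le
  have hq2 : 2 ≤ q := by
    rw [hq]; calc 2 ≤ p := hp2
    _ ≤ p ^ a := Nat.le_self_pow (by omega) p
  haveI : NeZero q := ⟨by omega⟩
  haveI : Fact p.Prime := ⟨hp⟩
  have hv : ((x.val : ℕ) : ZMod q) = x := by rw [ZMod.natCast_val, ZMod.cast_id]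
  set v := x.val with hvv
  -- mod p congruence
  have hmodp : v ^ (q-1) ≡ v ^ (p-1) [MOD p] := by
    have : ((v ^ (q-1) : ℕ) : ZMod p) = ((v ^ (p-1) : ℕ) : ZMod p) := by
      push_cast
      set y : ZMod p := (v : ZMod p) with hy
      by_cases hy0 : y = 0
      · rw [hy0, zero_pow (show q - 1 ≠ 0 by omega), zero_pow (show p - 1 ≠ 0 by omega)]
      · have h1 : y ^ (p-1) = 1 := ZMod.pow_card_sub_one_eq_one hy0
        have hdvd : (p - 1) ∣ (q - 1) := by
          have := Nat.sub_dvd_pow_sub_pow p 1 a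
          simpa [hq] using this
        obtain ⟨s, hs⟩ := hdvd
        rw [hs, pow_mul, h1, one_pow]
        try exact h1.symm
    exact (ZMod.natCast_eq_natCast_iff _ _ _).mp this
  -- multiply by p^(a-1)
  have hmodq : p^(a-1) * v ^ (q-1) ≡ p^(a-1) * v ^ (p-1) [MOD p^(a-1) * p] := hmodp.mul_left' _
  have hpq : p^(a-1) * p = q := by
    rw [hq, ← pow_succ]
    congr 1
    omega
  rw [hpq] at hmodq
  have := (ZMod.natCast_eq_natCast_iff _ _ q).mpr hmodq
  push_cast at this
  rw [hv] at this
  exact this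


def Vmod (q n e : ℕ) : Submodule (ZMod q) (MvPolynomial (Fin n) (ZMod q)) where
  carrier := {p | RMReduced p ∧ p.totalDegree ≤ e}
  add_mem' := by
    rintro a b ⟨ha1, ha2⟩ ⟨hb1, hb2⟩
    constructor
    · intro m hm i
      rcases Finset.mem_union.mp (MvPolynomial.support_add hm) with h | h
      exacts [ha1 m h i, hb1 m h i]
    · exact le_trans (totalDegree_add a b) (max_le ha2 hb2)
  zero_mem' := ⟨by intro m hm i; simp at hm, by simp⟩
  smul_mem' := by
    rintro c x ⟨h1, h2⟩
    constructor
    · intro m hm i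
      exact h1 m (Finsupp.support_smul hm) i
    · exact le_trans (totalDegree_smul_le c x) h2

lemma finite_V {q n e : ℕ} (hq1 : 1 ≤ q) : Finite (Vmod q n e) := by
  haveI : NeZero q := ⟨by omega⟩
  set F : Vmod q n e → ((Fin n → Fin q) → ZMod q) :=
    fun P g => coeff (Finsupp.equivFunOnFinite.symm (fun i => ((g i : ℕ)))) (P : MvPolynomial (Fin n) (ZMod q)) with hF
  have hinj : Function.Injective F := by
    intro P₁ P₂ h
    apply Subtype.ext
    apply MvPolynomial.ext
    intro m
    by_cases hm : ∀ i, m i ≤ q - 1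
    · set g : Fin n → Fin q := fun i => ⟨m i, by have := hm i; omega⟩ with hg
      have := congr_fun h g
      simp only [hF] at this
      have hmg : (Finsupp.equivFunOnFinite.symm (fun i => ((g i : ℕ)))) = m := by
        have : (fun i => ((g i : ℕ))) = ⇑m := by funext i; simp [hg]
        rw [this, Finsupp.equivFunOnFinite_symm_coe]
      rwa [hmg] at this
    · push_neg at hm
      obtain ⟨i, hi⟩ := hm
      have z1 : coeff m (P₁ : MvPolynomial (Fin n) (ZMod q)) = 0 := by
        by_contra hc
        exact absurd (P₁.2.1 m (MvPolynomial.mem_support_iff.mpr hc) i) (by omega)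
      have z2 : coeff m (P₂ : MvPolynomial (Fin n) (ZMod q)) = 0 := by
        by_contra hc
        exact absurd (P₂.2.1 m (MvPolynomial.mem_support_iff.mpr hc) i) (by omega)
      rw [z1, z2]
  exact Finite.of_injective F hinj

lemma prod_monomial_one {q n : ℕ} {ι : Type*} (s : Finset ι) (μ : ι → (Fin n →₀ ℕ)) :
    (∏ j ∈ s, monomial (μ j) (1 : ZMod q)) = monomial (∑ j ∈ s, μ j) 1 := by
  classical
  induction s using Finset.induction_on with
  | empty => simp [monomial_eq]
  | insert _ _ hns ih =>
    rw [Finset.prod_insert hns, Finset.sum_insert hns, ih, monomial_mul, mul_one]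

lemma card_compl {α : Type*} [Finite α] (p : α → Prop) :
    Nat.card {x // ¬ p x} = Nat.card α - Nat.card {x // p x} := by
  haveI := Fintype.ofFinite α
  letI : DecidablePred p := Classical.decPred p
  rw [Nat.card_eq_fintype_card, Nat.card_eq_fintype_card, Nat.card_eq_fintype_card]
  exact Fintype.card_subtype_compl p

lemma lin_count {F V : Type*} [Field F] [Finite F] [AddCommGroup V] [Module F V] [Finite V]
    (L : V →ₗ[F] F) (v₀ : V) (h₀ : L v₀ ≠ 0) :
    (Nat.card F - 1) * Nat.card V ≤ Nat.card F * Nat.card {v // L v ≠ 0} := by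
  have hsurj : Function.Surjective L := by
    intro c
    refine ⟨(c * (L v₀)⁻¹) • v₀, ?_⟩
    rw [map_smul, smul_eq_mul]
    field_simp
  have e1 : Nat.card (V ⧸ LinearMap.ker L) = Nat.card F :=
    Nat.card_congr (LinearMap.quotKerEquivOfSurjective L hsurj).toEquiv
  have e2 : Nat.card (LinearMap.ker L) = Nat.card {v // L v = 0} :=
    Nat.card_congr (Equiv.subtypeEquivRight (by intro v; simp [LinearMap.mem_ker]))
  have e3 : Nat.card V = Nat.card (V ⧸ LinearMap.ker L) * Nat.card (LinearMap.ker L) :=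
    (AddSubgroup.card_eq_card_quotient_mul_card_addSubgroup _)
  set c := Nat.card F with hc
  set z := Nat.card {v // L v = 0} with hz
  have hcard : Nat.card V = c * z := by rw [e3, e1, e2]
  have hcompl : Nat.card {v // L v ≠ 0} = Nat.card V - z := card_compl _
  rw [hcompl, hcard]
  have h4 : c * (c * z - z) = c * (c * z) - c * z := Nat.mul_sub c _ _
  have h5 : (c - 1) * (c * z) = c * (c * z) - 1 * (c * z) := Nat.sub_mul c 1 _
  have h6 : c * z ≤ c * (c * z) := by
    have hc1 : 1 ≤ c := Nat.card_pos
    calc c * z = c * (1 * z) := by ring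
    _ ≤ c * (c * z) := by
        apply Nat.mul_le_mul_left
        exact Nat.mul_le_mul_right z hc1
  omega

lemma mlin_count {F V : Type*} [Field F] [Finite F] [AddCommGroup V] [Module F V] [Finite V] :
    ∀ (k : ℕ) (Φ : (Fin k → V) → F),
      (∀ (j : Fin k) (P : Fin k → V), IsLinearMap F (fun v => Φ (Function.update P j v))) →
      ∀ (P₀ : Fin k → V), Φ P₀ ≠ 0 →
      (Nat.card F - 1) ^ k * Nat.card V ^ k ≤ Nat.card F ^ k * Nat.card {P // Φ P ≠ 0} := by
  intro k
  induction k with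
  | zero =>
    intro Φ hlin P₀ h₀
    simp only [pow_zero, one_mul]
    have : Nonempty {P : Fin 0 → V // Φ P ≠ 0} := ⟨⟨P₀, h₀⟩⟩
    exact Nat.card_pos
  | succ k ih =>
    intro Φ hlin P₀ h₀
    haveI : Finite (Fin k → V) := by infer_instance
    set T := Fin.tail P₀ with hT
    have hL : IsLinearMap F (fun v : V => Φ (Fin.cons v T)) := by
      have h := hlin 0 (Fin.cons (P₀ 0) T)
      have heq : (fun v : V => Φ (Fin.cons v T))
          = (fun v => Φ (Function.update (Fin.cons (P₀ 0) T) 0 v)) := by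
        funext v
        rw [Fin.update_cons_zero]
      rw [heq]
      exact h
    set L : V →ₗ[F] F := IsLinearMap.mk' _ hL with hLdef
    have hv₀ : L (P₀ 0) ≠ 0 := by
      show Φ (Fin.cons (P₀ 0) T) ≠ 0
      rw [hT, Fin.cons_self_tail]
      exact h₀
    have hA := lin_count L (P₀ 0) hv₀
    set A := {v : V // L v ≠ 0} with hAdef
    haveI : Fintype A := Fintype.ofFinite A
    -- per-v bound
    have hper : ∀ v : A, (Nat.card F - 1) ^ k * Nat.card V ^ k
        ≤ Nat.card F ^ k * Nat.card {Q : Fin k → V // Φ (Fin.cons (v : V) Q) ≠ 0} := by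
      intro v
      apply ih (fun Q => Φ (Fin.cons (v : V) Q))
      · intro j Q
        have h := hlin j.succ (Fin.cons (v : V) Q)
        have heq : (fun w : V => Φ (Fin.cons (v : V) (Function.update Q j w)))
            = (fun w => Φ (Function.update (Fin.cons (v : V) Q) j.succ w)) := by
          funext w
          rw [← Fin.cons_update]
        rw [heq]
        exact h
      · exact v.2
    -- injection from sigma
    set S := (Σ v : A, {Q : Fin k → V // Φ (Fin.cons (v : V) Q) ≠ 0}) with hS
    have hinj : Function.Injective
        (fun x : S => (⟨Fin.cons (x.1 : V) (x.2 : Fin k → V), x.2.2⟩ :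
          {P : Fin (k+1) → V // Φ P ≠ 0})) := by
      rintro ⟨⟨v, hv⟩, ⟨Q, hQ⟩⟩ ⟨⟨v', hv'⟩, ⟨Q', hQ'⟩⟩ h
      simp only [Subtype.mk.injEq] at h
      have hvv : v = v' := by
        have := congr_fun h 0
        simpa using this
      subst hvv
      have hQQ : Q = Q' := by
        funext j
        have := congr_fun h j.succ
        simpa using this
      subst hQQ
      rfl
    have hcardS : Nat.card S ≤ Nat.card {P : Fin (k+1) → V // Φ P ≠ 0} :=
      Nat.card_le_card_of_injective _ hinj
    haveI : ∀ v : A, Fintype {Q : Fin k → V // Φ (Fin.cons (v : V) Q) ≠ 0} :=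
      fun v => Fintype.ofFinite _
    have hsigma : Nat.card S = ∑ v : A, Nat.card {Q : Fin k → V // Φ (Fin.cons (v : V) Q) ≠ 0} := by
      rw [Nat.card_eq_fintype_card, Fintype.card_sigma]
      apply Finset.sum_congr rfl
      intro v _
      rw [Nat.card_eq_fintype_card]
    set c := Nat.card F with hc
    calc (c - 1) ^ (k+1) * Nat.card V ^ (k+1)
        = ((c-1) * Nat.card V) * ((c-1)^k * Nat.card V ^ k) := by ring
      _ ≤ (c * Nat.card A) * ((c-1)^k * Nat.card V ^ k) :=
          Nat.mul_le_mul_right _ hA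
      _ = c * (∑ _v : A, (c-1)^k * Nat.card V ^ k) := by
          rw [Finset.sum_const, Finset.card_univ, ← Nat.card_eq_fintype_card]
          ring
      _ ≤ c * (∑ v : A, c^k * Nat.card {Q : Fin k → V // Φ (Fin.cons (v : V) Q) ≠ 0}) := by
          apply Nat.mul_le_mul_left
          exact Finset.sum_le_sum (fun v _ => hper v)
      _ = c^(k+1) * Nat.card S := by
          rw [hsigma, Finset.mul_sum, Finset.mul_sum]
          apply Finset.sum_congr rfl
          intro v _
          ring
      _ ≤ c^(k+1) * Nat.card {P : Fin (k+1) → V // Φ P ≠ 0} :=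
          Nat.mul_le_mul_left _ hcardS
lemma mem_Vmod {q n e : ℕ} {p : MvPolynomial (Fin n) (ZMod q)} :
    p ∈ Vmod q n e ↔ InP q n e p := Iff.rfl

set_option maxHeartbeats 2000000 in
theorem stmt18 (q n d d' e k : ℕ) (hq : IsPrimePow q)
    (he : 1 ≤ e) (hk : 1 ≤ k) (hdd : d < d') (hdek : d + e * k < (q - 1) * n)
    (f : MvPolynomial (Fin n) (ZMod q)) (hf0 : f ≠ 0) (hred : RMReduced f)
    (hdeg : f.totalDegree = d') :
    -- the probability that `deg(f P_1 ⋯ P_k) ≤ d + ek` is at most `1 - q^{-k/(q-1)}`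
    ((Nat.card {P : Fin k → MvPolynomial (Fin n) (ZMod q) //
        (∀ i, InP q n e (P i)) ∧
        ∀ h : MvPolynomial (Fin n) (ZMod q), RMReduced h →
          (∀ x, eval x h = eval x f * ∏ i, eval x (P i)) →
          h.totalDegree ≤ d + e * k} : ℝ)
      ≤ (1 - (q : ℝ) ^ (-(k : ℝ) / ((q : ℝ) - 1))) *
          (Nat.card {P : Fin k → MvPolynomial (Fin n) (ZMod q) //
            ∀ i, InP q n e (P i)} : ℝ)) ∧
    -- and `1 - q^{-k/(q-1)} ≤ q^{-η(q,k)}` where `η(q,k) = 1/(q^{k/(q-1)} ln q)`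
    (1 - (q : ℝ) ^ (-(k : ℝ) / ((q : ℝ) - 1))
      ≤ (q : ℝ) ^ (-(1 / ((q : ℝ) ^ ((k : ℝ) / ((q : ℝ) - 1)) * Real.log q)))) := by
  have hq2 : 2 ≤ q := hq.two_le
  refine ⟨?_, part2 q hq2 k⟩
  obtain ⟨p, a, hpp, hapos, hpa⟩ := hq
  have hp : p.Prime := Nat.prime_iff.mpr hpp
  have hqa : q = p ^ a := hpa.symm
  have hn : 1 ≤ n := by
    rcases Nat.eq_zero_or_pos n with h | h
    · rw [h, Nat.mul_zero] at hdek; omega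
    · exact h
  haveI : NeZero q := ⟨by omega⟩
  obtain ⟨r, hr0, hrle, hrlet, hreq, hrpow⟩ := exists_r p a q hp hapos hqa
  -- the factor 1 - q^{-k/(q-1)} is nonnegative
  have hfac : (0:ℝ) ≤ 1 - (q : ℝ) ^ (-(k : ℝ) / ((q : ℝ) - 1)) := by
    have h1 : (1:ℝ) ≤ (q:ℝ) := by exact_mod_cast (by omega : 1 ≤ q)
    have h2 : (-(k : ℝ) / ((q : ℝ) - 1)) ≤ 0 := by
      apply div_nonpos_of_nonpos_of_nonneg
      · simp
      · have : (2:ℝ) ≤ (q:ℝ) := by exact_mod_cast hq2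
        linarith
    have := Real.rpow_le_one_of_one_le_of_nonpos h1 h2
    linarith
  by_cases ha2 : 2 ≤ a
  · -- composite case: the bad set is empty
    have hempty : IsEmpty {P : Fin k → MvPolynomial (Fin n) (ZMod q) //
        (∀ i, InP q n e (P i)) ∧
        ∀ h : MvPolynomial (Fin n) (ZMod q), RMReduced h →
          (∀ x, eval x h = eval x f * ∏ i, eval x (P i)) →
          h.totalDegree ≤ d + e * k} := by
      constructor
      rintro ⟨P, hInP, hbad⟩
      set g : MvPolynomial (Fin n) (ZMod q) := f * ∏ i, P i with hg
      set h₀ : MvPolynomial (Fin n) (ZMod q) := redP r hr0 g with hh₀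
      have hh₀red : RMReduced h₀ := redP_reduced r hr0 hrle g
      have hh₀ev : ∀ x, eval x h₀ = eval x f * ∏ i, eval x (P i) := by
        intro x
        rw [hh₀, eval_redP r hr0 hrpow, hg, map_mul, map_prod]
      have hh₀deg : h₀.totalDegree ≤ d + e * k := hbad h₀ hh₀red hh₀ev
      -- now build the high-degree representative
      set i₀ : Fin n := ⟨0, hn⟩ with hi₀
      set mstar : Fin n →₀ ℕ := Finsupp.equivFunOnFinite.symm (fun _ => q - 1) with hmstar
      set m' : Fin n →₀ ℕ :=
        Finsupp.equivFunOnFinite.symm (fun j => if j = i₀ then p - 1 else q - 1) with hm'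
      have hmstar_app : ∀ j, mstar j = q - 1 := fun j =>
        rfl
      have hm'_app : ∀ j, m' j = if j = i₀ then p - 1 else q - 1 := fun j =>
        rfl
      set c : ZMod q := ((p ^ (a-1) : ℕ) : ZMod q) with hc
      have hp2 : 2 ≤ p := hp.two_le
      have hplt : p < q := by
        rw [hqa]
        calc p = p ^ 1 := (pow_one p).symm
        _ < p ^ a := Nat.pow_lt_pow_right (by omega) (by omega)
      have hc0 : c ≠ 0 := by
        rw [hc, Ne, CharP.cast_eq_zero_iff (ZMod q) q]
        intro hdvd
        have h1 : q ≤ p ^ (a-1) := Nat.le_of_dvd (Nat.pow_pos (by omega)) hdvd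
        have h2 : p ^ (a-1) < p ^ a := Nat.pow_lt_pow_right (by omega) (by omega)
        omega
      have hm'ne : m' ≠ mstar := by
        intro hEq
        have := congr_fun (congrArg (fun z : Fin n →₀ ℕ => (z : Fin n → ℕ)) hEq) i₀
        rw [hm'_app i₀, hmstar_app i₀] at this
        simp at this
        omega
      set v : MvPolynomial (Fin n) (ZMod q) := monomial mstar c - monomial m' c with hv
      have hvred : ∀ m ∈ v.support, ∀ i, m i ≤ q - 1 := by
        intro m hm i
        rw [hv, sub_eq_add_neg] at hm
        classical
        rcases Finset.mem_union.mp (MvPolynomial.support_add hm) with h | h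
        · rw [support_monomial] at h
          split_ifs at h with hc'
          · simp at h
          · simp at h
            subst h
            rw [hmstar_app]
        · rw [support_neg, support_monomial] at h
          split_ifs at h with hc'
          · simp at h
          · simp at h
            subst h
            rw [hm'_app]
            split_ifs
            · omega
            · exact le_refl _
      have hvev : ∀ x : Fin n → ZMod q, eval x v = 0 := by
        intro x
        rw [hv, map_sub, eval_monomial, eval_monomial]
        rw [Finsupp.prod_fintype _ _ (fun i => pow_zero _),
            Finsupp.prod_fintype _ _ (fun i => pow_zero _)]
        classical
        rw [← Finset.mul_prod_erase Finset.univ _ (Finset.mem_univ i₀),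
            ← Finset.mul_prod_erase Finset.univ (fun j => x j ^ m' j) (Finset.mem_univ i₀)]
        have hsame : ∏ j ∈ Finset.univ.erase i₀, x j ^ mstar j
            = ∏ j ∈ Finset.univ.erase i₀, x j ^ m' j := by
          apply Finset.prod_congr rfl
          intro j hj
          have hji : j ≠ i₀ := Finset.ne_of_mem_erase hj
          rw [hmstar_app, hm'_app, if_neg hji]
        rw [← hsame]
        rw [hmstar_app, hm'_app, if_pos rfl]
        have hvan := comp_vanish p a q hp ha2 hqa (x i₀)
        have hc' : c = (p : ZMod q) ^ (a - 1) := by rw [hc]; push_cast; ring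
        rw [← hc'] at hvan
        set R := ∏ j ∈ Finset.univ.erase i₀, x j ^ mstar j with hR
        calc c * (x i₀ ^ (q-1) * R) - c * (x i₀ ^ (p-1) * R)
            = (c * x i₀ ^ (q-1) - c * x i₀ ^ (p-1)) * R := by ring
        _ = 0 := by rw [hvan]; ring
      -- h₁ := h₀ + v is a reduced representative of high degree
      set h₁ : MvPolynomial (Fin n) (ZMod q) := h₀ + v with hh₁
      have hh₁red : RMReduced h₁ := by
        intro m hm i
        classical
        rcases Finset.mem_union.mp (MvPolynomial.support_add hm) with h | h
        · exact hh₀red m h i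
        · exact hvred m h i
      have hh₁ev : ∀ x, eval x h₁ = eval x f * ∏ i, eval x (P i) := by
        intro x
        rw [hh₁, map_add, hvev x, add_zero, hh₀ev x]
      have hmstarsum : (mstar.sum fun _ t => t) = (q - 1) * n := by
        rw [Finsupp.sum_fintype _ _ (fun i => rfl)]
        have : ∀ j, mstar j = q - 1 := hmstar_app
        calc ∑ j, mstar j = ∑ _j : Fin n, (q-1) := Finset.sum_congr rfl (fun j _ => this j)
        _ = (q - 1) * n := by
            rw [Finset.sum_const, Finset.card_univ, Fintype.card_fin, smul_eq_mul, mul_comm]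
      have hcoeff : coeff mstar h₁ = c := by
        rw [hh₁, MvPolynomial.coeff_add]
        have h0 : coeff mstar h₀ = 0 := by
          by_contra hcne
          have hmem := MvPolynomial.mem_support_iff.mpr hcne
          have := MvPolynomial.le_totalDegree hmem
          rw [hmstarsum] at this
          omega
        have hvcoeff : coeff mstar v = c := by
          rw [hv, MvPolynomial.coeff_sub, coeff_monomial, coeff_monomial,
            if_pos rfl, if_neg hm'ne, sub_zero]
        rw [h0, hvcoeff, zero_add]
      have hd1 : (q - 1) * n ≤ h₁.totalDegree := by
        have hmem := MvPolynomial.mem_support_iff.mpr (hcoeff ▸ hc0)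
        have := MvPolynomial.le_totalDegree hmem
        rwa [hmstarsum] at this
      have := hbad h₁ hh₁red hh₁ev
      omega
    rw [Nat.card_of_isEmpty]
    push_cast
    positivity
  · -- prime case
    have ha1 : a = 1 := by omega
    have hqp : q.Prime := by rwa [hqa, ha1, pow_one] at hpa ⊢ <;> skip
    haveI : Fact q.Prime := ⟨hqp⟩
    haveI hVfin : Finite (Vmod q n e) := finite_V (by omega)
    classical
    -- choose a top-degree monomial m₀ of f
    have hsupne : f.support.Nonempty := MvPolynomial.support_nonempty.mpr hf0
    obtain ⟨m₀, hm₀mem, hm₀sup⟩ :=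
      Finset.exists_mem_eq_sup f.support hsupne (fun s : Fin n →₀ ℕ => s.sum fun _ t => t)
    have hsum_eq : ∀ σ : Fin n →₀ ℕ, (σ.sum fun _ t => t) = ∑ i, σ i :=
      fun σ => Finsupp.sum_fintype _ _ (fun i => rfl)
    have hm₀deg : (m₀.sum fun _ t => t) = d' := by
      rw [← hdeg]
      exact hm₀sup.symm
    have hm₀sum : ∑ i, m₀ i = d' := by rw [← hsum_eq]; exact hm₀deg
    have hm₀le : ∀ i, m₀ i ≤ q - 1 := hred m₀ hm₀mem
    -- capacity and choice of μ
    set cfs : Fin n →₀ ℕ := Finsupp.equivFunOnFinite.symm (fun i => q - 1 - m₀ i) with hcfs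
    have hcfs_app : ∀ i, cfs i = q - 1 - m₀ i := fun i =>
      rfl
    set D := d + e * k + 1 - d' with hD
    have hcap : D ≤ ∑ i, cfs i := by
      have h1 : ∑ i, cfs i = ∑ i, (q - 1 - m₀ i) := Finset.sum_congr rfl (fun i _ => hcfs_app i)
      have h2 : ∑ i, (q - 1 - m₀ i) + ∑ i, m₀ i = (q-1) * n := by
        rw [← Finset.sum_add_distrib]
        have h3 : ∀ i : Fin n, (q - 1 - m₀ i) + m₀ i = q - 1 := fun i => by
          have := hm₀le i; omega
        calc ∑ i, (q - 1 - m₀ i + m₀ i) = ∑ _i : Fin n, (q - 1) :=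
              Finset.sum_congr rfl (fun i _ => h3 i)
        _ = (q-1)*n := by
            rw [Finset.sum_const, Finset.card_univ, Fintype.card_fin, smul_eq_mul, mul_comm]
      omega
    obtain ⟨μ, hμle, hμsum⟩ := fill cfs D hcap
    have hμle' : ∀ i, m₀ i + μ i ≤ q - 1 := by
      intro i
      have h1 := hμle i
      rw [hcfs_app i] at h1
      have := hm₀le i
      omega
    obtain ⟨ν, hνsum, hνb⟩ := split e k μ (by omega)
    have hνle : ∀ j i, ν j i ≤ μ i := by
      intro j i
      have h1 : (∑ j', ν j') i = ∑ j', ν j' i := Finsupp.finset_sum_apply _ _ _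
      rw [hνsum] at h1
      rw [h1]
      exact Finset.single_le_sum (f := fun j' => ν j' i) (fun j' _ => Nat.zero_le _) (Finset.mem_univ j)
    -- witness tuple
    have hPmem : ∀ j, (monomial (ν j) (1 : ZMod q)) ∈ Vmod q n e := by
      intro j
      rw [mem_Vmod]
      constructor
      · intro m hm i
        rw [support_monomial] at hm
        split_ifs at hm with h1
        · simp at hm
        · simp only [Finset.mem_singleton] at hm
          subst hm
          have h2 := hνle j i
          have h3 := hμle' i
          omega
      · rw [totalDegree_monomial _ (one_ne_zero), hsum_eq]
        exact hνb j
    set P₀ : Fin k → Vmod q n e := fun j => ⟨monomial (ν j) 1, hPmem j⟩ with hP₀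
    set mtar : Fin n →₀ ℕ := m₀ + μ with hmtar
    set Φ : (Fin k → Vmod q n e) → ZMod q :=
      fun Q => coeff mtar (redP r hr0 (f * ∏ i, ((Q i : MvPolynomial (Fin n) (ZMod q))))) with hΦ
    have hmtarsum : ∑ i, mtar i = d' + D := by
      rw [hmtar]
      have : ∀ i : Fin n, (m₀ + μ) i = m₀ i + μ i := fun i => Finsupp.add_apply _ _ _
      calc ∑ i, (m₀ + μ) i = ∑ i, (m₀ i + μ i) := Finset.sum_congr rfl (fun i _ => this i)
      _ = (∑ i, m₀ i) + ∑ i, μ i := Finset.sum_add_distrib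
      _ = d' + D := by rw [hm₀sum, hμsum]
    have hmtar_big : d + e * k < d' + D := by omega
    -- Φ at the witness
    have hprod₀ : (∏ i, ((P₀ i : MvPolynomial (Fin n) (ZMod q)))) = monomial μ 1 := by
      rw [hP₀]
      simp only
      rw [prod_monomial_one, ← hνsum]
    have hΦP₀ : Φ P₀ ≠ 0 := by
      rw [hΦ]
      simp only
      rw [hprod₀, hmtar, coeff_redP_key r hr0 hreq hrlet f m₀ hm₀mem ?_ μ hμle']
      · exact MvPolynomial.mem_support_iff.mp hm₀mem
      · intro σ hσ
        have h1 := MvPolynomial.le_totalDegree hσ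
        rw [hdeg, hsum_eq] at h1
        omega
    -- multilinearity
    have hlin : ∀ (j : Fin k) (Q : Fin k → Vmod q n e),
        IsLinearMap (ZMod q) (fun v => Φ (Function.update Q j v)) := by
      intro j Q
      set RR : MvPolynomial (Fin n) (ZMod q) :=
        ∏ i ∈ Finset.univ \ {j}, (Q i : MvPolynomial (Fin n) (ZMod q)) with hRR
      have hprodupd : ∀ v : Vmod q n e,
          (∏ i, ((Function.update Q j v i : MvPolynomial (Fin n) (ZMod q))))
          = (v : MvPolynomial (Fin n) (ZMod q)) * RR := by
        intro v
        have heq : (fun i => ((Function.update Q j v i : MvPolynomial (Fin n) (ZMod q))))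
            = Function.update (fun i => (Q i : MvPolynomial (Fin n) (ZMod q))) j
                (v : MvPolynomial (Fin n) (ZMod q)) := by
          funext i
          by_cases hij : i = j
          · subst hij; simp [Function.update_self]
          · simp [Function.update_of_ne hij]
        calc (∏ i, ((Function.update Q j v i : MvPolynomial (Fin n) (ZMod q))))
            = ∏ i, (Function.update (fun i => (Q i : MvPolynomial (Fin n) (ZMod q))) j
                (v : MvPolynomial (Fin n) (ZMod q))) i := by rw [heq]
        _ = (v : MvPolynomial (Fin n) (ZMod q)) * RR :=
            Finset.prod_update_of_mem (Finset.mem_univ j) _ _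
      constructor
      · intro v w
        show coeff mtar _ = coeff mtar _ + coeff mtar _
        rw [hprodupd, hprodupd, hprodupd, Submodule.coe_add]
        rw [show f * (((v : MvPolynomial (Fin n) (ZMod q))
              + (w : MvPolynomial (Fin n) (ZMod q))) * RR)
            = f * ((v : MvPolynomial (Fin n) (ZMod q)) * RR)
              + f * ((w : MvPolynomial (Fin n) (ZMod q)) * RR) from by ring]
        rw [redP_add, MvPolynomial.coeff_add]
      · intro cc v
        show coeff mtar _ = cc * coeff mtar _
        rw [hprodupd, hprodupd, Submodule.coe_smul]
        rw [show f * ((cc • (v : MvPolynomial (Fin n) (ZMod q))) * RR)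
            = cc • (f * ((v : MvPolynomial (Fin n) (ZMod q)) * RR)) from by
          rw [smul_mul_assoc, mul_smul_comm]]
        rw [redP_smul, MvPolynomial.coeff_smul, smul_eq_mul]
    -- bad tuples give Φ = 0
    have hbadzero : ∀ (P : Fin k → MvPolynomial (Fin n) (ZMod q))
        (hP : ∀ i, InP q n e (P i)),
        (∀ h : MvPolynomial (Fin n) (ZMod q), RMReduced h →
          (∀ x, eval x h = eval x f * ∏ i, eval x (P i)) →
          h.totalDegree ≤ d + e * k) →
        Φ (fun i => ⟨P i, (mem_Vmod).mpr (hP i)⟩) = 0 := by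
      intro P hP hbad
      by_contra hΦne
      set h₀ := redP r hr0 (f * ∏ i, P i) with hh₀
      have hΦeq : Φ (fun i => ⟨P i, (mem_Vmod).mpr (hP i)⟩) = coeff mtar h₀ := rfl
      rw [hΦeq] at hΦne
      have hdegle : h₀.totalDegree ≤ d + e * k := by
        apply hbad h₀ (redP_reduced r hr0 hrle _)
        intro x
        rw [hh₀, eval_redP r hr0 hrpow, map_mul, map_prod]
      have hmem := MvPolynomial.mem_support_iff.mpr hΦne
      have h1 := MvPolynomial.le_totalDegree hmem
      rw [hsum_eq, hmtarsum] at h1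
      omega
    -- counting
    have hmlin := mlin_count k Φ hlin P₀ hΦP₀
    have hcardF : Nat.card (ZMod q) = q := by rw [Nat.card_eq_fintype_card, ZMod.card]
    rw [hcardF] at hmlin
    set cV := Nat.card (Vmod q n e) with hcV
    set G1 := Nat.card {Q : Fin k → Vmod q n e // Φ Q ≠ 0} with hG1
    have hGcard : Nat.card (Fin k → Vmod q n e) = cV ^ k := by
      rw [Nat.card_pi, Finset.prod_const, Finset.card_univ, Fintype.card_fin]
    have hNt : Nat.card {P : Fin k → MvPolynomial (Fin n) (ZMod q) //
        ∀ i, InP q n e (P i)} = cV ^ k := by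
      have eqv : {P : Fin k → MvPolynomial (Fin n) (ZMod q) // ∀ i, InP q n e (P i)}
          ≃ (Fin k → Vmod q n e) :=
        { toFun := fun x i => ⟨x.1 i, (mem_Vmod).mpr (x.2 i)⟩
          invFun := fun Q => ⟨fun i => (Q i : MvPolynomial (Fin n) (ZMod q)),
            fun i => (mem_Vmod).mp (Q i).2⟩
          left_inv := fun x => rfl
          right_inv := fun Q => rfl }
      rw [Nat.card_congr eqv, hGcard]
    have hbadle : Nat.card {P : Fin k → MvPolynomial (Fin n) (ZMod q) //
        (∀ i, InP q n e (P i)) ∧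
        ∀ h : MvPolynomial (Fin n) (ZMod q), RMReduced h →
          (∀ x, eval x h = eval x f * ∏ i, eval x (P i)) →
          h.totalDegree ≤ d + e * k}
        ≤ Nat.card {Q : Fin k → Vmod q n e // ¬ (Φ Q ≠ 0)} := by
      set F2 : {P : Fin k → MvPolynomial (Fin n) (ZMod q) //
        (∀ i, InP q n e (P i)) ∧
        ∀ h : MvPolynomial (Fin n) (ZMod q), RMReduced h →
          (∀ x, eval x h = eval x f * ∏ i, eval x (P i)) →
          h.totalDegree ≤ d + e * k} → {Q : Fin k → Vmod q n e // ¬ (Φ Q ≠ 0)} :=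
        fun x => ⟨fun i => ⟨x.1 i, (mem_Vmod).mpr (x.2.1 i)⟩,
          not_not.mpr (hbadzero x.1 x.2.1 x.2.2)⟩ with hF2
      have hF2inj : Function.Injective F2 := by
        intro x y hxy
        apply Subtype.ext
        funext i
        have h1 := congr_fun (congrArg Subtype.val hxy) i
        exact congrArg Subtype.val h1
      exact Nat.card_le_card_of_injective F2 hF2inj
    have hcompl : Nat.card {Q : Fin k → Vmod q n e // ¬ (Φ Q ≠ 0)} = cV ^ k - G1 := by
      rw [card_compl (fun Q => Φ Q ≠ 0), hGcard]
    have hG1le : G1 ≤ cV ^ k := by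
      rw [← hGcard]
      exact Nat.card_le_card_of_injective Subtype.val Subtype.val_injective
    -- real arithmetic
    rw [hNt]
    have hq0R : (0:ℝ) < q := Nat.cast_pos.mpr hqp.pos
    have hq1R : (1:ℝ) ≤ q := Nat.one_le_cast.mpr hqp.one_lt.le
    set s : ℝ := (q : ℝ) ^ (-(k : ℝ) / ((q : ℝ) - 1)) with hs
    have hcast : ((q - 1 : ℕ) : ℝ) = (q:ℝ) - 1 := by
      rw [Nat.cast_sub hqp.one_lt.le, Nat.cast_one]
    have key1 : ((q:ℝ) - 1)^k * (cV:ℝ)^k ≤ (q:ℝ)^k * (G1:ℝ) := by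
      have hcast2 : (((q - 1)^k * cV ^ k : ℕ) : ℝ) ≤ (((q:ℕ)^k * G1 : ℕ) : ℝ) := by
        exact_mod_cast hmlin
      push_cast at hcast2
      rw [hcast] at hcast2
      exact hcast2
    have key2 : s * (cV:ℝ)^k ≤ (G1:ℝ) := by
      have hb := bern q k hq2
      have h1 : s * (cV:ℝ)^k ≤ (((q:ℝ) - 1)/q)^k * (cV:ℝ)^k := by
        apply mul_le_mul_of_nonneg_right _ (by positivity)
        exact hb
      have h2 : (((q:ℝ) - 1)/q)^k * (cV:ℝ)^k ≤ (G1:ℝ) := by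
        rw [div_pow]
        rw [div_mul_eq_mul_div, div_le_iff₀ (by positivity)]
        calc ((q:ℝ) - 1)^k * (cV:ℝ)^k ≤ (q:ℝ)^k * (G1:ℝ) := key1
        _ = (G1:ℝ) * (q:ℝ)^k := by ring
      linarith
    calc (Nat.card {P : Fin k → MvPolynomial (Fin n) (ZMod q) //
        (∀ i, InP q n e (P i)) ∧
        ∀ h : MvPolynomial (Fin n) (ZMod q), RMReduced h →
          (∀ x, eval x h = eval x f * ∏ i, eval x (P i)) →
          h.totalDegree ≤ d + e * k} : ℝ)
        ≤ ((cV ^ k - G1 : ℕ) : ℝ) := by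
          exact_mod_cast le_trans hbadle (le_of_eq hcompl)
    _ = (cV:ℝ)^k - (G1:ℝ) := by
        rw [Nat.cast_sub hG1le]
        push_cast
        ring
    _ ≤ (1 - s) * (cV:ℝ)^k := by nlinarith [key2]
    _ = (1 - s) * ((cV ^ k : ℕ) : ℝ) := by push_cast; ring
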